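/- Let h : ℝ² → ℝ be C² on an open neighborhood of (0,0), write its arguments as (α, β), and set c = (∂h/∂β)(0,0). For r > 0 and λ ∈ ℝ with (r, λ/r) in the neighborhood, define g(λ, r) = h(r, λ/r). Then there exist constants C > 0 and r₀ > 0 such that for every r with 0 < r < r₀: the function λ ↦ g(λ, r) is differentiable at λ = 0 with derivative (∂g/∂λ)(0, r) = r⁻¹ (∂h/∂β)(r, 0), and |(∂g/∂λ)(0, r) − c/r| ≤ C. -/

import Mathlib

/-- Joint C² smoothness of h in (α, β) = (r, λ/r) near (0,0) implies that the first-order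
perturbation ∂_λ g|_{λ=0} of g(λ, r) = h(r, λ/r) exists for small r > 0, equals
r⁻¹ (∂h/∂β)(r, 0), and differs from c/r (with c = (∂h/∂β)(0,0)) by a bounded amount. -/
theorem stmt_10 (h : ℝ × ℝ → ℝ) (U : Set (ℝ × ℝ)) (hU : IsOpen U) (hU0 : (0, 0) ∈ U)
    (hh : ContDiffOn ℝ 2 h U) :
    ∃ C : ℝ, 0 < C ∧ ∃ r₀ : ℝ, 0 < r₀ ∧ ∀ r : ℝ, 0 < r → r < r₀ →
      HasDerivAt (fun lam : ℝ => h (r, lam / r))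
        (r⁻¹ * fderiv ℝ h (r, 0) ((0 : ℝ), (1 : ℝ))) 0 ∧
      |r⁻¹ * fderiv ℝ h (r, 0) ((0 : ℝ), (1 : ℝ)) -
        fderiv ℝ h (0, 0) ((0 : ℝ), (1 : ℝ)) / r| ≤ C := by
  have hhat : ContDiffAt ℝ 2 h (0, 0) := hh.contDiffAt (hU.mem_nhds hU0)
  have hfd : ContDiffAt ℝ 1 (fderiv ℝ h) (0, 0) := by
    have := hhat.fderiv_right (m := 1) (by norm_num)
    exact this
  obtain ⟨K, t, ht, hlip⟩ := hfd.exists_lipschitzOnWith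
  obtain ⟨ε, hε, hball⟩ := Metric.mem_nhds_iff.1 (Filter.inter_mem ht (hU.mem_nhds hU0))
  refine ⟨K + 1, by positivity, ε, hε, fun r hr hrε => ?_⟩
  have hmem : ((r : ℝ), (0 : ℝ)) ∈ Metric.ball ((0 : ℝ), (0 : ℝ)) ε := by
    simp [Metric.mem_ball, Prod.dist_eq, Real.dist_eq, abs_of_pos hr, hrε,
      Prod.norm_def, lt_of_le_of_lt, hε]
  have hmemU : ((r : ℝ), (0 : ℝ)) ∈ U := (hball hmem).2
  have hmemt : ((r : ℝ), (0 : ℝ)) ∈ t := (hball hmem).1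
  constructor
  · -- derivative
    have hdiff : DifferentiableAt ℝ h (r, 0) :=
      (hh.contDiffAt (hU.mem_nhds hmemU)).differentiableAt (by norm_num)
    have hφ : HasDerivAt (fun lam : ℝ => ((r : ℝ), lam / r)) ((0 : ℝ), r⁻¹) 0 :=
      HasDerivAt.prodMk (hasDerivAt_const (0 : ℝ) r) (by simpa using (hasDerivAt_id (0 : ℝ)).div_const r)
    have hF : HasFDerivAt h (fderiv ℝ h (r, 0)) (r, (0 : ℝ) / r) := by
      rw [zero_div]; exact hdiff.hasFDerivAt
    have := hF.comp_hasDerivAt 0 hφ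
    have key : fderiv ℝ h (r, 0) ((0 : ℝ), r⁻¹)
        = r⁻¹ * fderiv ℝ h (r, 0) ((0 : ℝ), (1 : ℝ)) := by
      have : ((0 : ℝ), r⁻¹) = r⁻¹ • ((0 : ℝ), (1 : ℝ)) := by simp
      rw [this, (fderiv ℝ h (r, 0)).map_smul]; rfl
    rw [key] at this
    exact this
  · -- bound
    have hdist := hlip.dist_le_mul _ hmemt _ (mem_of_mem_nhds ht)
    have hnorm : ‖fderiv ℝ h (r, 0) - fderiv ℝ h (0, 0)‖ ≤ K * r := by
      have hd : dist ((r : ℝ), (0 : ℝ)) ((0 : ℝ), (0 : ℝ)) = r := by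
        simp [Prod.dist_eq, Real.dist_eq, abs_of_pos hr, Prod.norm_def, Real.norm_eq_abs, hr.le]
      rw [dist_eq_norm, hd] at hdist
      exact hdist
    have happ : |fderiv ℝ h (r, 0) ((0 : ℝ), (1 : ℝ)) - fderiv ℝ h (0, 0) ((0 : ℝ), (1 : ℝ))|
        ≤ K * r := by
      have h1 : ‖(fderiv ℝ h (r, 0) - fderiv ℝ h (0, 0)) ((0 : ℝ), (1 : ℝ))‖
          ≤ ‖fderiv ℝ h (r, 0) - fderiv ℝ h (0, 0)‖ * ‖((0 : ℝ), (1 : ℝ))‖ :=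
        (fderiv ℝ h (r, 0) - fderiv ℝ h (0, 0)).le_opNorm _
      have h2 : ‖((0 : ℝ), (1 : ℝ))‖ = 1 := by simp [Prod.norm_def]
      calc |fderiv ℝ h (r, 0) ((0 : ℝ), (1 : ℝ)) - fderiv ℝ h (0, 0) ((0 : ℝ), (1 : ℝ))|
          = ‖(fderiv ℝ h (r, 0) - fderiv ℝ h (0, 0)) ((0 : ℝ), (1 : ℝ))‖ := by
            simp [Real.norm_eq_abs]
        _ ≤ ‖fderiv ℝ h (r, 0) - fderiv ℝ h (0, 0)‖ * ‖((0 : ℝ), (1 : ℝ))‖ := h1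
        _ = ‖fderiv ℝ h (r, 0) - fderiv ℝ h (0, 0)‖ := by rw [h2, mul_one]
        _ ≤ K * r := hnorm
    have : |r⁻¹ * fderiv ℝ h (r, 0) ((0 : ℝ), (1 : ℝ)) -
        fderiv ℝ h (0, 0) ((0 : ℝ), (1 : ℝ)) / r|
        = r⁻¹ * |fderiv ℝ h (r, 0) ((0 : ℝ), (1 : ℝ)) - fderiv ℝ h (0, 0) ((0 : ℝ), (1 : ℝ))| := by
      rw [div_eq_inv_mul, ← mul_sub, abs_mul, abs_of_pos (by positivity : (0:ℝ) < r⁻¹)]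
    rw [this]
    calc r⁻¹ * |fderiv ℝ h (r, 0) ((0 : ℝ), (1 : ℝ)) - fderiv ℝ h (0, 0) ((0 : ℝ), (1 : ℝ))|
        ≤ r⁻¹ * (K * r) := by
          exact mul_le_mul_of_nonneg_left happ (by positivity)
      _ = K := by field_simp
      _ ≤ K + 1 := by linarith [K.coe_nonneg]
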